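/- Let h_s, h_r, h_t be vectors in ℝ^d with h_r ≠ h_s and h_t ≠ h_r. If 1 - cos θ' ≤ ε where θ' is the angle between h_r - h_s and h_t - h_r, then the squared norm of the component of h_r - h_s orthogonal to h_t - h_s is at most 2ε · ‖h_r - h_s‖². -/

import Mathlib

/-- The component of `x` orthogonal to `y`. -/
noncomputable def perpComp {d : ℕ} (x y : EuclideanSpace ℝ (Fin d)) :
    EuclideanSpace ℝ (Fin d) :=
  x - ((inner ℝ x y : ℝ) / ‖y‖ ^ 2) • y

lemma perpComp_norm_sq {d : ℕ} (x y : EuclideanSpace ℝ (Fin d)) (hy : y ≠ 0) :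
    ‖perpComp x y‖ ^ 2 = ‖x‖ ^ 2 - (inner ℝ x y : ℝ) ^ 2 / ‖y‖ ^ 2 := by
  have hy2 : ‖y‖ ^ 2 ≠ 0 := pow_ne_zero 2 (norm_ne_zero_iff.mpr hy)
  rw [perpComp, norm_sub_sq_real, real_inner_smul_right, norm_smul,
    Real.norm_eq_abs, mul_pow, sq_abs]
  field_simp
  ring

lemma straightening_arith (A B t C e : ℝ) (hA : 0 < A) (hB : 0 < B)
    (hcs : t ≤ A * B) (ht' : (1 - e) * (A * B) ≤ t) (he : 0 ≤ e)
    (hCpos : 0 < C) (hnc : C = A ^ 2 + 2 * t + B ^ 2) :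
    A ^ 2 - (A ^ 2 + t) ^ 2 / C ≤ 2 * e * A ^ 2 := by
  have key : A ^ 2 * C - (A ^ 2 + t) ^ 2 ≤ 2 * e * A ^ 2 * C := by
    rcases le_or_gt (1/2) e with hhalf | hhalf
    · nlinarith [sq_nonneg (A ^ 2 + t),
        mul_nonneg (mul_nonneg (sq_nonneg A) hCpos.le)
          (by linarith : (0:ℝ) ≤ 2 * e - 1)]
    · have htpos : 0 < t := by nlinarith [mul_pos hA hB]
      have hCB : B ^ 2 ≤ C := by nlinarith
      have h3 : (A * B - t) * (A * B + t) ≤ e * (A * B) * (A * B + t) :=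
        mul_le_mul_of_nonneg_right (by nlinarith [mul_pos hA hB]) (by linarith)
      have h4 : e * (A * B) * (A * B + t) ≤ e * (A * B) * (2 * (A * B)) :=
        mul_le_mul_of_nonneg_left (by linarith)
          (mul_nonneg he (mul_pos hA hB).le)
      have h5 : 2 * e * A ^ 2 * B ^ 2 ≤ 2 * e * A ^ 2 * C :=
        mul_le_mul_of_nonneg_left hCB (by positivity)
      nlinarith [h3, h4, h5]
  have hfin : A ^ 2 - 2 * e * A ^ 2 ≤ (A ^ 2 + t) ^ 2 / C := by
    rw [le_div_iff₀ hCpos]; nlinarith [key]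
  linarith

/-- Straightening Lemma: if the cosine of the angle `θ'` between `h_r - h_s` and
`h_t - h_r` satisfies `1 - cos θ' ≤ ε`, then the squared norm of the component of
`h_r - h_s` orthogonal to `h_t - h_s` is at most `2ε‖h_r - h_s‖²`. -/
theorem straightening_lemma {d : ℕ} (hs hr ht : EuclideanSpace ℝ (Fin d)) (ε : ℝ)
    (h1 : hr ≠ hs) (h2 : ht ≠ hr)
    (hloss : 1 - (inner ℝ (hr - hs) (ht - hr) : ℝ) / (‖hr - hs‖ * ‖ht - hr‖) ≤ ε) :
    ‖perpComp (hr - hs) (ht - hs)‖ ^ 2 ≤ 2 * ε * ‖hr - hs‖ ^ 2 := by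
  set a := hr - hs with ha
  set b := ht - hr with hb
  have hA : 0 < ‖a‖ := norm_pos_iff.mpr (sub_ne_zero.mpr h1)
  have hB : 0 < ‖b‖ := norm_pos_iff.mpr (sub_ne_zero.mpr h2)
  have hcs : (inner ℝ a b : ℝ) ≤ ‖a‖ * ‖b‖ := real_inner_le_norm a b
  have ht' : (1 - ε) * (‖a‖ * ‖b‖) ≤ (inner ℝ a b : ℝ) := by
    have := mul_le_mul_of_nonneg_right (by linarith [hloss] : 1 - ε ≤ (inner ℝ a b : ℝ) / (‖a‖ * ‖b‖)) (le_of_lt (mul_pos hA hB))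
    calc (1 - ε) * (‖a‖ * ‖b‖) ≤ (inner ℝ a b : ℝ) / (‖a‖ * ‖b‖) * (‖a‖ * ‖b‖) := this
      _ = (inner ℝ a b : ℝ) := by field_simp
  have hε : 0 ≤ ε := by
    nlinarith [mul_pos hA hB]
  have hc : ht - hs = a + b := by rw [ha, hb]; abel
  rw [hc]
  by_cases hc0 : a + b = 0
  · -- then b = -a and inner ℝ a b = -‖a‖², so ε ≥ 2
    have hba : b = -a := eq_neg_of_add_eq_zero_right hc0
    have hi : (inner ℝ a b : ℝ) = -(‖a‖ ^ 2) := by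
      rw [hba, inner_neg_right, real_inner_self_eq_norm_sq]
    have hnb : ‖b‖ = ‖a‖ := by rw [hba, norm_neg]
    have hε2 : 2 ≤ ε := by
      rw [hi, hnb] at hloss
      have : -(‖a‖ ^ 2) / (‖a‖ * ‖a‖) = -1 := by
        field_simp
      rw [this] at hloss; linarith
    rw [hc0, perpComp]
    simp only [inner_zero_right, norm_zero]
    norm_num
    nlinarith [sq_nonneg ‖a‖]
  · rw [perpComp_norm_sq _ _ hc0]
    have hiac : (inner ℝ a (a + b) : ℝ) = ‖a‖ ^ 2 + inner ℝ a b := by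
      rw [inner_add_right, real_inner_self_eq_norm_sq]
    have hnc : ‖a + b‖ ^ 2 = ‖a‖ ^ 2 + 2 * inner ℝ a b + ‖b‖ ^ 2 := norm_add_sq_real a b
    have hCpos : 0 < ‖a + b‖ ^ 2 := pow_pos (norm_pos_iff.mpr hc0) 2
    rw [hiac]
    exact straightening_arith ‖a‖ ‖b‖ (inner ℝ a b) (‖a + b‖ ^ 2) ε hA hB hcs ht' hε hCpos hnc
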